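/- On the square grid ℤ², a chain of coins (a sequence c₁, …, c_k with L¹-distance between consecutive coins at most 2) arranged along two sides of a rectangle as an 'L' — starting at one corner, ending at the opposite corner — has span equal to the full rectangle. Concretely: the set L = {(0, 2i) : 0 ≤ i ≤ m} ∪ {(2j, 2m) : 0 ≤ j ≤ m'} has span equal to the full rectangle {0,…,2m'} × {0,…,2m}. -/

import Mathlib

/-- The span of a set of positions: the least superset closed under adding any
vertex adjacent to at least 2 vertices of the set. -/
def Span {P : Type*} (G : SimpleGraph P) (C : Set P) : Set P :=
  ⋂₀ {S : Set P | C ⊆ S ∧ ∀ p, (∃ a ∈ S, ∃ b ∈ S, a ≠ b ∧ G.Adj p a ∧ G.Adj p b) → p ∈ S}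


/-- The square grid on ℤ². -/
def Grid : SimpleGraph (ℤ × ℤ) where
  Adj p q := |p.1 - q.1| + |p.2 - q.2| = 1
  symm := ⟨fun p q (h : |p.1 - q.1| + |p.2 - q.2| = 1) => show |q.1 - p.1| + |q.2 - p.2| = 1 by
    rw [abs_sub_comm q.1 p.1, abs_sub_comm q.2 p.2]; exact h⟩
  loopless := ⟨fun p => show ¬ (|p.1 - p.1| + |p.2 - p.2| = 1) by simp⟩

lemma subset_span {P : Type*} (G : SimpleGraph P) (C : Set P) : C ⊆ Span G C := by
  intro p hp T hT
  exact hT.1 hp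

lemma span_closed {P : Type*} (G : SimpleGraph P) (C : Set P) {p a b : P}
    (ha : a ∈ Span G C) (hb : b ∈ Span G C) (hab : a ≠ b)
    (hpa : G.Adj p a) (hpb : G.Adj p b) : p ∈ Span G C := by
  intro T hT
  exact hT.2 p ⟨a, ha T hT, b, hb T hT, hab, hpa, hpb⟩

lemma grid_adj_iff (p q : ℤ × ℤ) : Grid.Adj p q ↔ |p.1 - q.1| + |p.2 - q.2| = 1 :=
  Iff.rfl

lemma grid_adj_cases {p q : ℤ × ℤ} (h : Grid.Adj p q) :
    q = (p.1 + 1, p.2) ∨ q = (p.1 - 1, p.2) ∨ q = (p.1, p.2 + 1) ∨ q = (p.1, p.2 - 1) := by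
  rw [grid_adj_iff] at h
  rcases abs_cases (p.1 - q.1) with ⟨h1, _⟩ | ⟨h1, _⟩ <;>
    rcases abs_cases (p.2 - q.2) with ⟨h2, _⟩ | ⟨h2, _⟩ <;>
    · rw [h1, h2] at h
      rcases q with ⟨a, b⟩
      simp only [Prod.ext_iff]
      omega

lemma grid_adj_of (p q : ℤ × ℤ) (h1 : p.1 = q.1) (h2 : p.2 - q.2 = 1 ∨ q.2 - p.2 = 1) :
    Grid.Adj p q := by
  rw [grid_adj_iff]
  have e1 : p.1 - q.1 = 0 := by omega
  rcases h2 with h | h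
  · rw [e1, h]; simp
  · rw [e1, show p.2 - q.2 = -1 by omega]; simp
lemma grid_adj_of' (p q : ℤ × ℤ) (h2 : p.2 = q.2) (h1 : p.1 - q.1 = 1 ∨ q.1 - p.1 = 1) :
    Grid.Adj p q := by
  rw [grid_adj_iff]
  have e2 : p.2 - q.2 = 0 := by omega
  rcases h1 with h | h
  · rw [e2, h]; simp
  · rw [e2, show p.1 - q.1 = -1 by omega]; simp

/-- An L-shaped chain along two sides of a rectangle has span equal to the full
rectangle. -/
theorem span_L_eq_rectangle (m m' : ℤ) (hm : 0 ≤ m) (hm' : 0 ≤ m') :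
    Span Grid
        ({p | ∃ i : ℤ, 0 ≤ i ∧ i ≤ m ∧ p = ((0 : ℤ), 2 * i)} ∪
         {p | ∃ j : ℤ, 0 ≤ j ∧ j ≤ m' ∧ p = (2 * j, 2 * m)}) =
      Set.Icc (0 : ℤ) (2 * m') ×ˢ Set.Icc (0 : ℤ) (2 * m) := by
  set C : Set (ℤ × ℤ) :=
      ({p | ∃ i : ℤ, 0 ≤ i ∧ i ≤ m ∧ p = ((0 : ℤ), 2 * i)} ∪
       {p | ∃ j : ℤ, 0 ≤ j ∧ j ≤ m' ∧ p = (2 * j, 2 * m)})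
  -- column 0 is in the span
  have col0 : ∀ y : ℤ, 0 ≤ y → y ≤ 2 * m → ((0 : ℤ), y) ∈ Span Grid C := by
    intro y hy0 hy1
    rcases Int.even_or_odd y with ⟨i, hi⟩ | ⟨i, hi⟩
    · exact subset_span Grid C (Or.inl ⟨i, by omega, by omega, by rw [hi]; ring_nf⟩)
    · refine span_closed Grid C
        (a := ((0:ℤ), 2 * i)) (b := ((0:ℤ), 2 * (i + 1)))
        (subset_span Grid C (Or.inl ⟨i, by omega, by omega, rfl⟩))
        (subset_span Grid C (Or.inl ⟨i + 1, by omega, by omega, rfl⟩))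
        (by intro h; rw [Prod.mk.injEq] at h; omega) ?_ ?_
      · exact grid_adj_of _ _ rfl (by omega)
      · exact grid_adj_of _ _ rfl (by omega)
  -- top row is in the span
  have row : ∀ x : ℤ, 0 ≤ x → x ≤ 2 * m' → (x, 2 * m) ∈ Span Grid C := by
    intro x hx0 hx1
    rcases Int.even_or_odd x with ⟨j, hj⟩ | ⟨j, hj⟩
    · exact subset_span Grid C (Or.inr ⟨j, by omega, by omega, by rw [hj]; ring_nf⟩)
    · refine span_closed Grid C
        (a := (2 * j, 2 * m)) (b := (2 * (j + 1), 2 * m))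
        (subset_span Grid C (Or.inr ⟨j, by omega, by omega, rfl⟩))
        (subset_span Grid C (Or.inr ⟨j + 1, by omega, by omega, rfl⟩))
        (by intro h; rw [Prod.mk.injEq] at h; omega) ?_ ?_
      · exact grid_adj_of' _ _ rfl (by omega)
      · exact grid_adj_of' _ _ rfl (by omega)
  -- every column is in the span
  have main : ∀ n : ℕ, (n : ℤ) ≤ 2 * m' →
      ∀ y : ℤ, 0 ≤ y → y ≤ 2 * m → ((n : ℤ), y) ∈ Span Grid C := by
    intro n
    induction n with
    | zero => intro _ y hy0 hy1; exact col0 y hy0 hy1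
    | succ n ih =>
      intro hn
      have hn' : ((n : ℤ) + 1) ≤ 2 * m' := by push_cast at hn; omega
      have inner : ∀ k : ℕ, ∀ y : ℤ, 0 ≤ y → y = 2 * m - k →
          (((n : ℤ) + 1), y) ∈ Span Grid C := by
        intro k
        induction k with
        | zero =>
          intro y hy0 hy
          have : y = 2 * m := by push_cast at hy; omega
          subst this
          exact row _ (by positivity) hn'
        | succ k ihk =>
          intro y hy0 hy
          push_cast at hy
          refine span_closed Grid C
            (a := ((n : ℤ), y)) (b := (((n : ℤ) + 1), y + 1))
            (ih (by omega) y hy0 (by omega))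
            (ihk (y + 1) (by omega) (by omega))
            (by intro h; rw [Prod.mk.injEq] at h; omega) ?_ ?_
          · exact grid_adj_of' _ _ rfl (by omega)
          · exact grid_adj_of _ _ rfl (by omega)
      intro y hy0 hy1
      have hk : y = 2 * m - ((2 * m - y).toNat : ℤ) := by omega
      have := inner (2 * m - y).toNat y hy0 hk
      push_cast at this ⊢
      exact this
  ext ⟨x, y⟩
  constructor
  · intro hp
    refine hp (Set.Icc (0 : ℤ) (2 * m') ×ˢ Set.Icc (0 : ℤ) (2 * m)) ⟨?_, ?_⟩
    · rintro p (⟨i, hi0, hi1, rfl⟩ | ⟨j, hj0, hj1, rfl⟩) <;>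
        refine ⟨Set.mem_Icc.2 ⟨by omega, by omega⟩, Set.mem_Icc.2 ⟨by omega, by omega⟩⟩
    · rintro ⟨a, b⟩ ⟨u, hu, v, hv, huv, hau, hav⟩
      rcases grid_adj_cases hau with rfl | rfl | rfl | rfl <;>
        rcases grid_adj_cases hav with rfl | rfl | rfl | rfl <;>
        first
          | exact absurd rfl huv
          | (obtain ⟨hu1, hu2⟩ := hu
             obtain ⟨hv1, hv2⟩ := hv
             simp only [Set.mem_Icc] at hu1 hu2 hv1 hv2
             exact ⟨Set.mem_Icc.2 ⟨by omega, by omega⟩, Set.mem_Icc.2 ⟨by omega, by omega⟩⟩)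
  · rintro ⟨hx, hy⟩
    simp only [Set.mem_Icc] at hx hy
    have hx' : ((x.toNat : ℤ)) = x := Int.toNat_of_nonneg hx.1
    have := main x.toNat (by omega) y hy.1 hy.2
    rwa [hx'] at this
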